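/- Let q = 2^n and let m be a positive integer with m ≡ 0 (mod 4). For every polynomial f ∈ 𝔽_q[x] of degree m and every nonzero α ∈ 𝔽_q, there exists a unique polynomial L ∈ 𝔽_q[x] of degree at most (m-2)/2 such that L(x(x+α)) = f(x+α) + f(x) as polynomials in 𝔽_q[x]. -/

import Mathlib

open Polynomial

variable {F : Type*} [Field F] [CharP F 2]

private lemma comp_coeff_pred (h : Polynomial F) (α : F) (d : ℕ) (hd0 : 0 < d)
    (hd : h.natDegree ≤ d) :
    (h.comp (X + C α)).coeff (d - 1) = h.coeff (d - 1) + d * h.coeff d * α := by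
  have h1 : (h.comp (X + C α)) = taylor α h := (taylor_apply α h).symm
  rw [h1, taylor_coeff]
  have hdeg : (hasseDeriv (d-1) h).natDegree < 2 := by
    have := natDegree_hasseDeriv_le h (d-1)
    omega
  rw [eval_eq_sum_range' hdeg]
  have e0 : (hasseDeriv (d-1) h).coeff 0 = h.coeff (d-1) := by
    rw [hasseDeriv_coeff]; simp
  have e1 : (hasseDeriv (d-1) h).coeff 1 = d * h.coeff d := by
    rw [hasseDeriv_coeff]
    have : 1 + (d - 1) = d := by omega
    rw [this]
    have : d.choose (d-1) = d := by
      rw [← Nat.choose_symm (by omega : d - 1 ≤ d)]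
      have h2 : d - (d - 1) = 1 := by omega
      rw [h2, Nat.choose_one_right]
    rw [this]
  rw [Finset.sum_range_succ, Finset.sum_range_one, e0, e1]
  ring

private lemma even_of_invariant (α : F) (hα : α ≠ 0) (h : Polynomial F)
    (hinv : h.comp (X + C α) = h) (hd : h.natDegree ≠ 0) : 2 ∣ h.natDegree := by
  set d := h.natDegree with hdd
  have hd0 : 0 < d := Nat.pos_of_ne_zero hd
  have hc := comp_coeff_pred h α d hd0 le_rfl
  rw [hinv] at hc
  have : (d : F) * h.coeff d * α = 0 := by
    have := hc.symm
    linear_combination this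
  have hcd : h.coeff d ≠ 0 := by
    rw [hdd]
    exact mt leadingCoeff_eq_zero.mp (fun h0 => hd (by simp [hdd, h0]))
  have : (d : F) = 0 := by
    rcases mul_eq_zero.mp this with h1 | h1
    · rcases mul_eq_zero.mp h1 with h2 | h2
      · exact h2
      · exact absurd h2 hcd
    · exact absurd h1 hα
  exact (CharP.cast_eq_zero_iff F 2 d).mp this

private lemma g_invariant (α : F) :
    (X * (X + C α)).comp (X + C α) = X * (X + C α) := by
  have h2 : (C α + C α : Polynomial F) = 0 := by
    rw [← C_add, CharTwo.add_self_eq_zero, C_0]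
  simp only [mul_comp, X_comp, add_comp, C_comp]
  rw [add_assoc, h2, add_zero, mul_comm]

private lemma g_natDegree (α : F) : (X * (X + C α)).natDegree = 2 := by
  have : (X * (X + C α) : Polynomial F).natDegree = 1 + 1 := by
    rw [natDegree_mul X_ne_zero (X_add_C_ne_zero α), natDegree_X, natDegree_X_add_C]
  omega

private lemma g_monic (α : F) : (X * (X + C α) : Polynomial F).Monic :=
  (monic_X).mul (monic_X_add_C α)

private lemma exists_rep (α : F) (hα : α ≠ 0) (N : ℕ) :
    ∀ h : Polynomial F, h.natDegree ≤ N → h.comp (X + C α) = h →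
      ∃ L : Polynomial F, L.natDegree ≤ h.natDegree / 2 ∧ L.comp (X * (X + C α)) = h := by
  induction N with
  | zero =>
      intro h hN hinv
      obtain ⟨c, rfl⟩ := natDegree_eq_zero.mp (Nat.le_zero.mp hN)
      exact ⟨C c, by simp, by simp⟩
  | succ N ih =>
      intro h hN hinv
      by_cases hd : h.natDegree = 0
      · obtain ⟨c, rfl⟩ := natDegree_eq_zero.mp hd
        exact ⟨C c, by simp, by simp⟩
      · set d := h.natDegree with hdd
        have hd0 : 0 < d := Nat.pos_of_ne_zero hd
        have heven : 2 ∣ d := even_of_invariant α hα h hinv hd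
        set g : Polynomial F := X * (X + C α) with hg
        set c := h.leadingCoeff with hc
        have hne : h ≠ 0 := fun h0 => hd (by simp [hdd, h0])
        have hcne : c ≠ 0 := leadingCoeff_ne_zero.mpr hne
        set q : Polynomial F := C c * g ^ (d / 2) with hq
        have hqmonic : (g ^ (d/2)).Monic := (g_monic α).pow _
        have hqdeg : q.natDegree = d := by
          rw [hq, natDegree_C_mul hcne, natDegree_pow, g_natDegree]
          omega
        have hqlc : q.leadingCoeff = c := by
          rw [hq, leadingCoeff_mul, leadingCoeff_C, hqmonic.leadingCoeff, mul_one]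
        set h' : Polynomial F := h - q with hh'
        have hdeglt : h'.natDegree < d := by
          by_cases h'0 : h' = 0
          · rw [h'0]; simpa using hd0
          · have hq0 : q ≠ 0 := fun q0 => hcne (by rw [← hqlc, q0, leadingCoeff_zero])
            have : h'.degree < h.degree := by
              apply degree_sub_lt _ hne (by rw [hqlc])
              rw [degree_eq_natDegree hne, degree_eq_natDegree hq0, hqdeg]
            exact natDegree_lt_natDegree h'0 this
        have hqinv : q.comp (X + C α) = q := by
          rw [hq, mul_comp, C_comp, pow_comp, g_invariant]
        have h'inv : h'.comp (X + C α) = h' := by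
          rw [hh', sub_comp, hinv, hqinv]
        obtain ⟨L', hL'deg, hL'⟩ := ih h' (by omega) h'inv
        refine ⟨L' + C c * X ^ (d / 2), ?_, ?_⟩
        · apply le_trans (natDegree_add_le _ _)
          apply max_le
          · exact le_trans hL'deg (Nat.div_le_div_right (by omega))
          · apply le_trans (natDegree_C_mul_le _ _)
            simp
        · rw [add_comp, hL', mul_comp, C_comp, pow_comp, X_comp, ← hq, hh']
          ring

theorem exists_unique_Lalpha (n m : ℕ) (hn : 0 < n) (hm : 0 < m) (hm4 : m % 4 = 0)
    (f : Polynomial (GaloisField 2 n)) (hf : f.natDegree = m)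
    (α : GaloisField 2 n) (hα : α ≠ 0) :
    ∃! L : Polynomial (GaloisField 2 n),
      L.natDegree ≤ (m - 2) / 2 ∧
        L.comp (X * (X + C α)) = f.comp (X + C α) + f := by
  haveI : CharP (GaloisField 2 n) 2 := inferInstance
  set h : Polynomial (GaloisField 2 n) := f.comp (X + C α) + f with hh
  -- invariance
  have hXinv : ((X + C α : Polynomial (GaloisField 2 n))).comp (X + C α) = X + C (α + α) := by
    simp [add_comp, C_add]; ring
  have hXα : ((X + C α : Polynomial (GaloisField 2 n))).comp (X + C α) = X := by
    rw [hXinv, CharTwo.add_self_eq_zero, C_0, add_zero]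
  have hinv : h.comp (X + C α) = h := by
    rw [hh, add_comp, comp_assoc, hXα, comp_X, add_comm]
  -- m even, (m : F) = 0
  have hm2 : 2 ∣ m := by omega
  have hmF : (m : GaloisField 2 n) = 0 := (CharP.cast_eq_zero_iff (GaloisField 2 n) 2 m).mpr hm2
  -- degree bound
  have hcompdeg : (f.comp (X + C α)).natDegree = m := by
    rw [← taylor_apply, natDegree_taylor, hf]
  have hdeg : h.natDegree ≤ m - 2 := by
    rw [natDegree_le_iff_coeff_eq_zero]
    intro N hN
    rcases lt_trichotomy N m with hNm | hNm | hNm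
    · have hNm1 : N = m - 1 := by omega
      rw [hNm1, hh, coeff_add, comp_coeff_pred f α m hm (le_of_eq hf), hmF]
      linear_combination CharTwo.add_self_eq_zero (f.coeff (m-1))
    · rw [hNm, hh, coeff_add]
      have : (f.comp (X + C α)).coeff m = f.coeff m := by
        rw [← taylor_apply, taylor_coeff]
        have hd1 : (hasseDeriv m f).natDegree < 1 := by
          have := natDegree_hasseDeriv_le f m
          omega
        rw [eval_eq_sum_range' hd1, Finset.sum_range_one, hasseDeriv_coeff]
        simp
      rw [this, CharTwo.add_self_eq_zero]
    · rw [hh, coeff_add, coeff_eq_zero_of_natDegree_lt (by omega : (f.comp (X + C α)).natDegree < N),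
        coeff_eq_zero_of_natDegree_lt (by omega : f.natDegree < N), add_zero]
  -- existence
  obtain ⟨L, hLdeg, hL⟩ := exists_rep α hα h.natDegree h le_rfl hinv
  refine ⟨L, ⟨le_trans hLdeg (le_trans (Nat.div_le_div_right hdeg) le_rfl), hL⟩, ?_⟩
  rintro L2 ⟨-, hL2⟩
  have hsub : (L2 - L).comp (X * (X + C α)) = 0 := by
    rw [sub_comp, hL2, hL, sub_self]
  rcases (comp_eq_zero_iff).mp hsub with h0 | ⟨-, hgc⟩
  · exact sub_eq_zero.mp h0
  · exfalso
    have := g_natDegree α (F := GaloisField 2 n)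
    rw [hgc, natDegree_C] at this
    omega
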